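/- Let k ≥ 1 and let Σ00, Ω00, Σθθ, Ωθθ be symmetric positive definite real k×k matrices, and let Σ0θ, Ω0θ be real k×k matrices satisfying (i) Ω00⁻¹ * Ω0θ = Σ00⁻¹ * Σ0θ and (ii) Ωθθ⁻¹ * Ω0θᵀ = Σθθ⁻¹ * Σ0θᵀ. Define B̃ = Σ00^{-1/2} * Ω00 * Σ00^{-1/2} and D = Σ00^{-1/2} * Σ0θ * Σθθ⁻¹ * Σ0θᵀ * Σ00^{-1/2}, where Σ00^{1/2} denotes the positive definite square root of Σ00. Then D * B̃ = B̃ * D. -/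

import Mathlib

open Matrix

namespace Matrix.PosSemidef

open scoped ComplexOrder

/-- The positive semidefinite square root of a positive semidefinite matrix
(restored with its Mathlib (Dec 2024) definition, removed since). -/
noncomputable def sqrt {n 𝕜 : Type*} [RCLike 𝕜] [Fintype n] [DecidableEq n]
    {A : Matrix n n 𝕜} (hA : PosSemidef A) : Matrix n n 𝕜 :=
  hA.1.eigenvectorUnitary.1 * diagonal ((↑) ∘ (√·) ∘ hA.1.eigenvalues) *
  (star hA.1.eigenvectorUnitary : Matrix n n 𝕜)

end Matrix.PosSemidef

/-- Key matrix computation in the proof of Theorem 3(b) of Andrews–Mikusheva: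
under the invariance conditions, `B̃ = Σ00^{-1/2} Ω00 Σ00^{-1/2}` commutes with
`D = Σ00^{-1/2} Σ0θ Σθθ⁻¹ Σ0θᵀ Σ00^{-1/2}`. -/
theorem stmt_0 (k : ℕ) (hk : 1 ≤ k)
    (S00 O00 Stt Ott : Matrix (Fin k) (Fin k) ℝ)
    (hS00 : S00.PosDef) (hO00 : O00.PosDef) (hStt : Stt.PosDef) (hOtt : Ott.PosDef)
    (S0t O0t : Matrix (Fin k) (Fin k) ℝ)
    (h1 : O00⁻¹ * O0t = S00⁻¹ * S0t)
    (h2 : Ott⁻¹ * O0tᵀ = Stt⁻¹ * S0tᵀ) :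
    ((hS00.posSemidef.sqrt)⁻¹ * S0t * Stt⁻¹ * S0tᵀ * (hS00.posSemidef.sqrt)⁻¹) *
      ((hS00.posSemidef.sqrt)⁻¹ * O00 * (hS00.posSemidef.sqrt)⁻¹)
    = ((hS00.posSemidef.sqrt)⁻¹ * O00 * (hS00.posSemidef.sqrt)⁻¹) *
      ((hS00.posSemidef.sqrt)⁻¹ * S0t * Stt⁻¹ * S0tᵀ * (hS00.posSemidef.sqrt)⁻¹) := by
  set M := hS00.posSemidef.sqrt with hM
  -- symmetry facts
  have hS00s : S00ᵀ = S00 := by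
    rw [← conjTranspose_eq_transpose_of_trivial]; exact hS00.isHermitian
  have hStts : Sttᵀ = Stt := by
    rw [← conjTranspose_eq_transpose_of_trivial]; exact hStt.isHermitian
  have hOtts : Ottᵀ = Ott := by
    rw [← conjTranspose_eq_transpose_of_trivial]; exact hOtt.isHermitian
  have hO00s : O00ᵀ = O00 := by
    rw [← conjTranspose_eq_transpose_of_trivial]; exact hO00.isHermitian
  -- invertibility
  haveI := hO00.isUnit.invertible
  haveI := hOtt.isUnit.invertible
  have hMsq : M * M = S00 := by
    have hU := Unitary.coe_star_mul_self hS00.posSemidef.1.eigenvectorUnitary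
    conv_rhs => rw [hS00.posSemidef.1.spectral_theorem, Unitary.conjStarAlgAut_apply]
    rw [hM, Matrix.PosSemidef.sqrt]
    set U := hS00.posSemidef.1.eigenvectorUnitary
    rw [show ∀ D : Matrix (Fin k) (Fin k) ℝ, (U : Matrix (Fin k) (Fin k) ℝ) * D * (star U : Matrix (Fin k) (Fin k) ℝ) * ((U : Matrix (Fin k) (Fin k) ℝ) * D * (star U : Matrix (Fin k) (Fin k) ℝ)) = U * (D * ((star U : Matrix (Fin k) (Fin k) ℝ) * U) * D) * (star U : Matrix (Fin k) (Fin k) ℝ) from fun D => by simp only [Matrix.mul_assoc]]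
    rw [hU, Matrix.mul_one, diagonal_mul_diagonal]
    congr 3
    funext i
    simp only [Function.comp_apply, RCLike.ofReal_real_eq_id, id]
    exact Real.mul_self_sqrt (hS00.posSemidef.eigenvalues_nonneg i)
  have hMdet : IsUnit M.det := by
    have : M.det * M.det = S00.det := by rw [← det_mul, hMsq]
    have h0 : S00.det ≠ 0 := ne_of_gt hS00.det_pos
    have : M.det ≠ 0 := fun h => h0 (by rw [← this, h, zero_mul])
    exact isUnit_iff_ne_zero.mpr this
  haveI : Invertible M := ((isUnit_iff_isUnit_det M).2 hMdet).invertible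
  have hMM : M⁻¹ * M⁻¹ = S00⁻¹ := by rw [← Matrix.mul_inv_rev, hMsq]
  -- from h1: O0t = O00 * (S00⁻¹ * S0t)
  have eq1 : O0t = O00 * (S00⁻¹ * S0t) := by
    rw [← h1, Matrix.mul_inv_cancel_left_of_invertible]
  have eq2 : O0tᵀ = Ott * (Stt⁻¹ * S0tᵀ) := by
    rw [← h2, Matrix.mul_inv_cancel_left_of_invertible]
  -- transpose of eq1
  have tA : S0tᵀ * S00⁻¹ * O00 = Ott * Stt⁻¹ * S0tᵀ := by
    have := congrArg Matrix.transpose eq1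
    simp only [Matrix.transpose_mul, Matrix.transpose_nonsing_inv, hS00s, hO00s] at this
    rw [← this, eq2, Matrix.mul_assoc]
  have tB : O00 * S00⁻¹ * S0t = S0t * Stt⁻¹ * Ott := by
    have := congrArg Matrix.transpose eq2
    simp only [Matrix.transpose_mul, Matrix.transpose_transpose,
      Matrix.transpose_nonsing_inv, hStts, hOtts] at this
    rw [← this, eq1, Matrix.mul_assoc]
  -- core commutation
  have core : (S0t * Stt⁻¹ * S0tᵀ) * S00⁻¹ * O00 = O00 * S00⁻¹ * (S0t * Stt⁻¹ * S0tᵀ) := by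
    calc (S0t * Stt⁻¹ * S0tᵀ) * S00⁻¹ * O00
        = S0t * Stt⁻¹ * (S0tᵀ * S00⁻¹ * O00) := by simp only [Matrix.mul_assoc]
      _ = S0t * Stt⁻¹ * (Ott * Stt⁻¹ * S0tᵀ) := by rw [tA]
      _ = (S0t * Stt⁻¹ * Ott) * (Stt⁻¹ * S0tᵀ) := by simp only [Matrix.mul_assoc]
      _ = (O00 * S00⁻¹ * S0t) * (Stt⁻¹ * S0tᵀ) := by rw [tB]
      _ = O00 * S00⁻¹ * (S0t * Stt⁻¹ * S0tᵀ) := by simp only [Matrix.mul_assoc]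
  have expand : ∀ A B : Matrix (Fin k) (Fin k) ℝ,
      (M⁻¹ * A * M⁻¹) * (M⁻¹ * B * M⁻¹) = M⁻¹ * (A * S00⁻¹ * B) * M⁻¹ := by
    intro A B
    rw [← hMM]
    simp only [Matrix.mul_assoc]
  have hD : M⁻¹ * S0t * Stt⁻¹ * S0tᵀ * M⁻¹ = M⁻¹ * (S0t * Stt⁻¹ * S0tᵀ) * M⁻¹ := by
    simp only [Matrix.mul_assoc]
  rw [hD, expand, expand, core]
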